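/- Define f̃: ℤ[σ_1,...,σ_{n-k}, e_1,...,e_n] → ℤ[σ_1,...,σ_{n-k}, e_1,...,e_n, q] by f̃(σ_i) = σ_i, f̃(e_i) = e_i for 1 ≤ i ≤ n−1, and f̃(e_n) = e_n + (−1)^k q. Let Ŷ_r = det(σ̂_{1+j−i})_{1≤i,j≤r} where σ̂_m are determined from σ_1,...,σ_{n-k} and e_1,...,e_n by the recursion ∑_{i=0}^{m} e_i σ̂_{m−i} = σ̃_m with σ̃_m = σ_m for m ≤ n−k and σ̃_m = 0 for m > n−k. Then f̃ maps the ideal (Ŷ_{k+1},...,Ŷ_{n−1}, Ŷ_n) into the ideal (Ŷ_{k+1},...,Ŷ_{n−1}, Ŷ_n + (−1)^{n−k} q), and hence descends to a ring homomorphism from the equivariant cohomology presentation ℤ[σ,e]/(Ŷ_{k+1},...,Ŷ_n) to the equivariant quantum presentation ℤ[σ,e,q]/(Ŷ_{k+1},...,Ŷ_n + (−1)^{n−k} q). -/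
import Mathlib


open MvPolynomial

/-- Given sequences `e` and `st` (with `st` playing the role of `σ̃`), `shat e st` is the
sequence `σ̂` determined by the recursion `σ̃_m = ∑_{i=0}^{m} e_i σ̂_{m-i}` (assuming
`e 0 = 1`), i.e. `σ̂_m = σ̃_m - ∑_{i=1}^{m} e_i σ̂_{m-i}`. -/
noncomputable def shat {R : Type*} [CommRing R] (e st : ℕ → R) : ℕ → R
  | r => st r - ∑ i : Fin r, e (r - i.val) * shat e st i.val
termination_by r => r
decreasing_by exact i.isLt

/-- `σ̂` extended to integer indices, vanishing for negative indices. -/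
noncomputable def shatZ {R : Type*} [CommRing R] (e st : ℕ → R) (m : ℤ) : R :=
  if 0 ≤ m then shat e st m.toNat else 0

/-- The equivariant Giambelli determinant `Ŷ_r = det (σ̂_{1+j-i})_{1 ≤ i,j ≤ r}`. -/
noncomputable def Yhat {R : Type*} [CommRing R] (e st : ℕ → R) (r : ℕ) : R :=
  Matrix.det (Matrix.of fun i j : Fin r => shatZ e st (1 + (j.val : ℤ) - (i.val : ℤ)))

/-- The ambient ring `ℤ[σ_1, ..., σ_{n-k}, e_1, ..., e_n]` of the equivariant
presentation. -/
abbrev EqRing (n k : ℕ) := MvPolynomial (Fin (n - k) ⊕ Fin n) ℤ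

/-- The ambient ring `ℤ[σ_1, ..., σ_{n-k}, e_1, ..., e_n, q]` of the equivariant
quantum presentation. -/
abbrev EqQRing (n k : ℕ) := MvPolynomial ((Fin (n - k) ⊕ Fin n) ⊕ Unit) ℤ

/-- `e_i` in the equivariant ring: `e_0 = 1`, variables for `1 ≤ i ≤ n`, `0` beyond. -/
noncomputable def eSrc (n k : ℕ) : ℕ → EqRing n k := fun i =>
  if i = 0 then 1 else if h : i - 1 < n then X (Sum.inr ⟨i - 1, h⟩) else 0

/-- `σ̃_m` in the equivariant ring: `σ̃_0 = 1`, `σ̃_m = σ_m` for `1 ≤ m ≤ n - k`,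
`σ̃_m = 0` for `m > n - k`. -/
noncomputable def stSrc (n k : ℕ) : ℕ → EqRing n k := fun m =>
  if m = 0 then 1 else if h : m - 1 < n - k then X (Sum.inl ⟨m - 1, h⟩) else 0

/-- `e_i` in the equivariant quantum ring. -/
noncomputable def eTgt (n k : ℕ) : ℕ → EqQRing n k := fun i =>
  if i = 0 then 1 else if h : i - 1 < n then X (Sum.inl (Sum.inr ⟨i - 1, h⟩)) else 0

/-- `σ̃_m` in the equivariant quantum ring. -/
noncomputable def stTgt (n k : ℕ) : ℕ → EqQRing n k := fun m =>
  if m = 0 then 1 else if h : m - 1 < n - k then X (Sum.inl (Sum.inl ⟨m - 1, h⟩)) else 0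

/-- The quantum variable `q`. -/
noncomputable def qv (n k : ℕ) : EqQRing n k := X (Sum.inr ())

/-- The map `f̃ : ℤ[σ, e] → ℤ[σ, e, q]` with `f̃(σ_i) = σ_i`, `f̃(e_i) = e_i` for
`1 ≤ i ≤ n - 1`, and `f̃(e_n) = e_n + (-1)^k q`. -/
noncomputable def ftilde (n k : ℕ) : EqRing n k →+* EqQRing n k :=
  (MvPolynomial.aeval (fun v : Fin (n - k) ⊕ Fin n =>
    match v with
    | Sum.inl i => (X (Sum.inl (Sum.inl i)) : EqQRing n k)
    | Sum.inr i =>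
        if i.val = n - 1 then X (Sum.inl (Sum.inr i)) + (-1) ^ k * qv n k
        else X (Sum.inl (Sum.inr i))) :
    EqRing n k →ₐ[ℤ] EqQRing n k).toRingHom

lemma shat_eq {R : Type*} [CommRing R] (e st : ℕ → R) (r : ℕ) :
    shat e st r = st r - ∑ i : Fin r, e (r - i.val) * shat e st i.val := by
  rw [shat]

lemma shat_zero {R : Type*} [CommRing R] (e st : ℕ → R) : shat e st 0 = st 0 := by
  rw [shat_eq]; simp

lemma ftilde_X_inl (n k : ℕ) (i : Fin (n - k)) :
    ftilde n k (X (Sum.inl i)) = X (Sum.inl (Sum.inl i)) := by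
  simp [ftilde]

lemma ftilde_X_inr (n k : ℕ) (i : Fin n) (h : i.val ≠ n - 1) :
    ftilde n k (X (Sum.inr i)) = X (Sum.inl (Sum.inr i)) := by
  simp [ftilde, h]

lemma ftilde_X_inr_last (n k : ℕ) (i : Fin n) (h : i.val = n - 1) :
    ftilde n k (X (Sum.inr i)) = X (Sum.inl (Sum.inr i)) + (-1) ^ k * qv n k := by
  simp [ftilde, h]

lemma map_e (n k : ℕ) (i : ℕ) (hi : i < n) : ftilde n k (eSrc n k i) = eTgt n k i := by
  rcases Nat.eq_zero_or_pos i with h0 | h0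
  · simp [h0, eSrc, eTgt]
  · have h1 : i ≠ 0 := by omega
    have h2 : i - 1 < n := by omega
    have h3 : i - 1 ≠ n - 1 := by omega
    simp only [eSrc, eTgt, h1, if_false, dif_pos h2]
    exact ftilde_X_inr n k _ h3

lemma map_e_top (n k : ℕ) (hn : 0 < n) :
    ftilde n k (eSrc n k n) = eTgt n k n + (-1) ^ k * qv n k := by
  have h1 : n ≠ 0 := by omega
  have h2 : n - 1 < n := by omega
  simp only [eSrc, eTgt, h1, if_false, dif_pos h2]
  exact ftilde_X_inr_last n k _ rfl

lemma map_st (n k : ℕ) (m : ℕ) : ftilde n k (stSrc n k m) = stTgt n k m := by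
  rcases Nat.eq_zero_or_pos m with h0 | h0
  · simp [h0, stSrc, stTgt]
  · have h1 : m ≠ 0 := by omega
    by_cases h2 : m - 1 < n - k
    · simp only [stSrc, stTgt, h1, if_false, dif_pos h2]
      exact ftilde_X_inl n k _
    · simp [stSrc, stTgt, h1, h2]

lemma map_shat (n k : ℕ) : ∀ m, m < n →
    ftilde n k (shat (eSrc n k) (stSrc n k) m) = shat (eTgt n k) (stTgt n k) m := by
  intro m
  induction m using Nat.strong_induction_on with
  | _ m ih =>
    intro hm
    rw [shat_eq, shat_eq, map_sub, map_sum, map_st]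
    congr 1
    refine Finset.sum_congr rfl fun i _ => ?_
    rw [map_mul, map_e n k _ (by omega), ih i.val i.isLt (by omega)]

lemma map_shat_top (n k : ℕ) (hn : 0 < n) :
    ftilde n k (shat (eSrc n k) (stSrc n k) n)
      = shat (eTgt n k) (stTgt n k) n - (-1) ^ k * qv n k := by
  obtain ⟨m, rfl⟩ : ∃ m, n = m + 1 := ⟨n - 1, by omega⟩
  rw [shat_eq, shat_eq, map_sub, map_sum, map_st]
  rw [Fin.sum_univ_succ, Fin.sum_univ_succ]
  simp only [Fin.val_zero, Nat.sub_zero, Fin.val_succ]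
  rw [map_mul, map_e_top _ _ hn, shat_zero, shat_zero]
  have hst : ftilde (m+1) k (stSrc (m+1) k 0) = stTgt (m+1) k 0 := map_st _ _ 0
  have hsum : ∀ i : Fin m,
      ftilde (m+1) k (eSrc (m+1) k (m + 1 - (i.val + 1)) * shat (eSrc (m+1) k) (stSrc (m+1) k) (i.val + 1))
        = eTgt (m+1) k (m + 1 - (i.val + 1)) * shat (eTgt (m+1) k) (stTgt (m+1) k) (i.val + 1) := by
    intro i
    rw [map_mul, map_e _ _ _ (by omega), map_shat _ _ _ (by omega)]
  rw [Finset.sum_congr rfl fun i _ => hsum i, hst]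
  have h0 : stTgt (m+1) k 0 = 1 := by simp [stTgt]
  rw [h0]
  ring

lemma map_shatZ (n k : ℕ) (z : ℤ) (hz : z < n) :
    ftilde n k (shatZ (eSrc n k) (stSrc n k) z) = shatZ (eTgt n k) (stTgt n k) z := by
  unfold shatZ
  split
  · exact map_shat n k _ (by omega)
  · simp

lemma map_Yhat (n k : ℕ) (r : ℕ) (hr : r < n) :
    ftilde n k (Yhat (eSrc n k) (stSrc n k) r) = Yhat (eTgt n k) (stTgt n k) r := by
  unfold Yhat
  rw [RingHom.map_det]
  refine congrArg Matrix.det (Matrix.ext fun i j => ?_)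
  simp only [RingHom.mapMatrix_apply, Matrix.map_apply, Matrix.of_apply]
  have hj := j.isLt
  exact map_shatZ n k (1 + (j.val : ℤ) - (i.val : ℤ)) (by omega)

lemma map_Yhat_top (n k : ℕ) (hn : 0 < n) (hk : k ≤ n) :
    ftilde n k (Yhat (eSrc n k) (stSrc n k) n)
      = Yhat (eTgt n k) (stTgt n k) n + (-1) ^ (n - k) * qv n k := by
  obtain ⟨m, rfl⟩ : ∃ m, n = m + 1 := ⟨n - 1, by omega⟩
  set n := m + 1 with hn1
  set f := ftilde n k
  set A : Matrix (Fin n) (Fin n) (EqQRing n k) :=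
    (f.mapMatrix (Matrix.of fun i j : Fin n =>
      shatZ (eSrc n k) (stSrc n k) (1 + (j.val : ℤ) - (i.val : ℤ)))) with hA
  set B : Matrix (Fin n) (Fin n) (EqQRing n k) :=
    (Matrix.of fun i j : Fin n =>
      shatZ (eTgt n k) (stTgt n k) (1 + (j.val : ℤ) - (i.val : ℤ))) with hB
  set c : EqQRing n k := -((-1) ^ k * qv n k) with hc
  -- entries of A vs B
  have hAB : ∀ i j : Fin n, (i.val, j.val) ≠ (0, m) → A i j = B i j := by
    intro i j hij
    have hi := i.isLt
    have hj := j.isLt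
    simp only [hA, hB, RingHom.mapMatrix_apply, Matrix.map_apply, Matrix.of_apply, f]
    have : (1 + (j.val : ℤ) - (i.val : ℤ)) < n := by
      rcases Nat.eq_zero_or_pos i.val with h | h
      · have : j.val ≠ m := fun hjm => hij (by simp [h, hjm])
        omega
      · omega
    exact map_shatZ n k _ this
  have hABtop : A 0 (Fin.last m) = B 0 (Fin.last m) + c := by
    simp only [hA, hB, RingHom.mapMatrix_apply, Matrix.map_apply, Matrix.of_apply, f]
    have h1 : (1 + (((Fin.last m).val : ℕ):ℤ) - (((0 : Fin n).val:ℕ):ℤ)) = ((n : ℕ) : ℤ) := by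
      simp only [Fin.val_last, Fin.val_zero, hn1]; push_cast; omega
    rw [h1]
    have h2 : shatZ (eSrc n k) (stSrc n k) ((n:ℕ):ℤ) = shat (eSrc n k) (stSrc n k) n := by
      simp [shatZ]
    have h3 : shatZ (eTgt n k) (stTgt n k) ((n:ℕ):ℤ) = shat (eTgt n k) (stTgt n k) n := by
      simp [shatZ]
    rw [h2, h3, map_shat_top n k (by omega), hc]
    ring
  have hsub : ∀ j : Fin n, A.submatrix Fin.succ j.succAbove = B.submatrix Fin.succ j.succAbove := by
    intro j
    refine Matrix.ext fun i' j' => ?_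
    simp only [Matrix.submatrix_apply]
    refine hAB _ _ ?_
    simp [Prod.ext_iff, Fin.val_succ]
  have hrow : ∀ j : Fin n, A 0 j = B 0 j + (if j = Fin.last m then c else 0) := by
    intro j
    by_cases hj : j = Fin.last m
    · subst hj; rw [if_pos rfl]; exact hABtop
    · rw [if_neg hj, add_zero]
      refine hAB _ _ ?_
      have hjv : j.val ≠ m := fun h => hj (Fin.ext (by simpa using h))
      simp [Prod.ext_iff, hjv]
  have hD : (B.submatrix Fin.succ (Fin.last m).succAbove).det = 1 := by
    rw [Fin.succAbove_last]
    have ht : (B.submatrix Fin.succ Fin.castSucc).BlockTriangular id := by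
      intro i j hij
      have hij' : j.val < i.val := hij
      simp only [Matrix.submatrix_apply, hB, Matrix.of_apply, shatZ]
      rw [if_neg]
      simp only [Fin.coe_castSucc, Fin.val_succ]
      push_cast
      omega
    rw [Matrix.det_of_upperTriangular ht]
    refine Finset.prod_eq_one fun i _ => ?_
    simp only [Matrix.submatrix_apply, hB, Matrix.of_apply]
    have h0 : 1 + (((Fin.castSucc i).val : ℕ) : ℤ) - (((Fin.succ i).val : ℕ) : ℤ) = 0 := by
      simp only [Fin.coe_castSucc, Fin.val_succ]; push_cast; ring
    rw [h0]
    simp [shatZ, shat_zero, stTgt]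
  unfold Yhat
  rw [RingHom.map_det]
  show A.det = B.det + _
  rw [Matrix.det_succ_row_zero A, Matrix.det_succ_row_zero B]
  have step : ∀ j : Fin n, (-1 : EqQRing n k) ^ (j.val) * A 0 j * (A.submatrix Fin.succ j.succAbove).det
      = (-1) ^ (j.val) * B 0 j * (B.submatrix Fin.succ j.succAbove).det
        + (if j = Fin.last m then (-1) ^ (j.val) * c * (B.submatrix Fin.succ j.succAbove).det else 0) := by
    intro j
    rw [hsub, hrow]
    split <;> ring
  rw [Finset.sum_congr rfl fun j _ => step j, Finset.sum_add_distrib,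
    Finset.sum_ite_eq' Finset.univ (Fin.last m)]
  simp only [Finset.mem_univ, if_true, Fin.val_last, hD, mul_one]
  congr 1
  have hpow : ((-1 : EqQRing n k)) ^ (m + k + 1) = (-1) ^ (n - k) := by
    have h2 : m + k + 1 = (n - k) + 2 * k := by omega
    rw [h2, pow_add, pow_mul, neg_one_sq, one_pow, mul_one]
  calc (-1 : EqQRing n k) ^ m * c = (-1) ^ (m + k + 1) * qv n k := by rw [hc]; ring
    _ = (-1) ^ (n - k) * qv n k := by rw [hpow]


/-- `f̃` maps the relation ideal `(Ŷ_{k+1}, ..., Ŷ_{n-1}, Ŷ_n)` of the equivariant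
presentation into the relation ideal `(Ŷ_{k+1}, ..., Ŷ_{n-1}, Ŷ_n + (-1)^{n-k} q)` of
the equivariant quantum presentation, hence descends to a ring homomorphism on the
quotients. -/
theorem ftilde_descends (n k : ℕ) (hkn : k < n) :
    Ideal.span ((Yhat (eSrc n k) (stSrc n k)) '' (Set.Icc (k + 1) n)) ≤
      Ideal.comap (ftilde n k)
        (Ideal.span
          ({Yhat (eTgt n k) (stTgt n k) n + (-1) ^ (n - k) * qv n k} ∪
            (Yhat (eTgt n k) (stTgt n k)) '' (Set.Icc (k + 1) (n - 1)))) := by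

  rw [Ideal.span_le]
  rintro x ⟨r, hr, rfl⟩
  rw [Set.mem_Icc] at hr
  simp only [SetLike.mem_coe, Ideal.mem_comap]
  rcases eq_or_lt_of_le hr.2 with h | h
  · subst h
    rw [map_Yhat_top r k (by omega) (by omega)]
    exact Ideal.subset_span (Or.inl rfl)
  · rw [map_Yhat n k r h]
    exact Ideal.subset_span (Or.inr ⟨r, Set.mem_Icc.mpr ⟨hr.1, by omega⟩, rfl⟩)
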